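/- Let x₁, y₁ ∈ A satisfy x₁·(y² + y) = y₁·(x² + x). Then (x² + x) divides x₁ in A and (y² + y) divides y₁ in A. -/

import Mathlib

noncomputable section

open Polynomial

/-- The defining polynomial `Y² + Y + (X³ + X + 1)` over `𝔽₂[X]`,
viewed as a polynomial in `Y` with coefficients in `𝔽₂[X]`. -/
def curveEq : Polynomial (Polynomial (ZMod 2)) :=
  X ^ 2 + X + C (X ^ 3 + X + 1)

/-- The ring `A = 𝔽₂[X,Y]/(Y² + Y + X³ + X + 1)`. -/
abbrev A : Type := AdjoinRoot curveEq

/-- The image `x` of `X` in `A`. -/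
def aX : A := AdjoinRoot.of curveEq (X : Polynomial (ZMod 2))

/-- The image `y` of `Y` in `A`. -/
def aY : A := AdjoinRoot.root curveEq

/-- If `x₁·(y² + y) = y₁·(x² + x)` in `A`, then `(x² + x) ∣ x₁` and
`(y² + y) ∣ y₁`. -/
theorem stmt0 (x₁ y₁ : A) (h : x₁ * (aY ^ 2 + aY) = y₁ * (aX ^ 2 + aX)) :
    (aX ^ 2 + aX) ∣ x₁ ∧ (aY ^ 2 + aY) ∣ y₁ := by
  have h2 : (2 : A) = 0 := by
    have h : ((2 : ℕ) : Polynomial (ZMod 2)) = 0 := CharP.cast_eq_zero _ 2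
    have := congrArg (AdjoinRoot.of curveEq) h
    rw [map_natCast, map_zero] at this
    exact_mod_cast this
  have h0 : aY ^ 2 + aY + (aX ^ 3 + aX + 1) = 0 := by
    have : AdjoinRoot.mk curveEq (X ^ 2 + X + C (X ^ 3 + X + 1)) = 0 := AdjoinRoot.mk_self
    simpa [aY, aX, map_add, map_pow, map_one, AdjoinRoot.mk_X, AdjoinRoot.mk_C] using this
  have hkey : (aX + 1) * (aX ^ 2 + aX) + (aY ^ 2 + aY) = 1 := by
    linear_combination h0 + (aX ^ 2 - 1) * h2
  refine ⟨⟨(aX + 1) * x₁ + y₁, ?_⟩, ⟨(aX + 1) * x₁ + y₁, ?_⟩⟩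
  · linear_combination h - x₁ * hkey
  · linear_combination -(aX + 1) * h - y₁ * hkey
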